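/- Suppose the equation (r z')' = q z on ℝ has a PFSS {u, v}. Then the only solution z of this equation belonging to L_p(ℝ) for some p ∈ [1, ∞) is z ≡ 0. -/

import Mathlib

open MeasureTheory Filter Set intervalIntegral

def IsSol (r q z : ℝ → ℝ) : Prop :=
  Differentiable ℝ z ∧ Differentiable ℝ (fun x => r x * deriv z x) ∧
    ∀ x, deriv (fun y => r y * deriv z y) x = q x * z x

def IsPFSS (r q u v : ℝ → ℝ) : Prop :=
  IsSol r q u ∧ IsSol r q v ∧
  (∀ x, 0 < u x) ∧ (∀ x, 0 < v x) ∧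
  (∀ x, deriv u x ≤ 0) ∧ (∀ x, 0 ≤ deriv v x) ∧
  (∀ x, r x * (deriv v x * u x - deriv u x * v x) = 1) ∧
  Tendsto (fun x => u x / v x) atTop (nhds 0) ∧
  Tendsto (fun x => v x / u x) atBot (nhds 0)

/-- The (modified) Wronskian of two solutions is constant. -/
lemma wronskian_const (r q f g : ℝ → ℝ) (hf : IsSol r q f) (hg : IsSol r q g) (x y : ℝ) :
    (r x * deriv f x) * g x - (r x * deriv g x) * f x
      = (r y * deriv f y) * g y - (r y * deriv g y) * f y := by
  obtain ⟨hfd, hrfd, hfode⟩ := hf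
  obtain ⟨hgd, hrgd, hgode⟩ := hg
  apply is_const_of_deriv_eq_zero ((hrfd.mul hgd).sub (hrgd.mul hfd))
  intro t
  have h1 : deriv (fun s => (r s * deriv f s) * g s - (r s * deriv g s) * f s) t
      = (deriv (fun s => r s * deriv f s) t * g t + (r t * deriv f t) * deriv g t)
        - (deriv (fun s => r s * deriv g s) t * f t + (r t * deriv g t) * deriv f t) := by
    rw [deriv_fun_sub ((hrfd t).fun_mul (hgd t)) ((hrgd t).fun_mul (hfd t)),
      deriv_fun_mul (hrfd t) (hgd t), deriv_fun_mul (hrgd t) (hfd t)]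
  show deriv (fun s => (r s * deriv f s) * g s - (r s * deriv g s) * f s) t = 0
  rw [h1, hfode t, hgode t]; ring

/-- A function in Lᵖ cannot be bounded below in absolute value by a positive
constant on a set of infinite measure. -/
lemma not_memLp_aux (z : ℝ → ℝ) (p : ℝ) (hp : 1 ≤ p)
    (hzp : MemLp z (ENNReal.ofReal p) volume) (s : Set ℝ) (hs : MeasurableSet s)
    (hsv : volume s = ⊤) (c : ℝ) (hc : 0 < c) (hbd : ∀ x ∈ s, c ≤ |z x|) : False := by
  have hp0 : ENNReal.ofReal p ≠ 0 := by
    simp only [ne_eq, ENNReal.ofReal_eq_zero, not_le]; linarith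
  have hptop : ENNReal.ofReal p ≠ ⊤ := ENNReal.ofReal_ne_top
  have hres := hzp.restrict s
  have hconst : MemLp (fun _ : ℝ => c) (ENNReal.ofReal p) (volume.restrict s) := by
    apply hres.of_le aestronglyMeasurable_const
    refine (ae_restrict_iff' hs).2 (ae_of_all _ fun x hx => ?_)
    simpa [Real.norm_eq_abs, abs_of_pos hc] using hbd x hx
  rcases (memLp_const_iff hp0 hptop).1 hconst with h | h
  · exact hc.ne' h
  · rw [Measure.restrict_apply_univ, hsv] at h
    exact lt_irrefl _ h

theorem stmt6 (r q u v z : ℝ → ℝ) (h : IsPFSS r q u v) (hz : IsSol r q z)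
    (p : ℝ) (hp : 1 ≤ p) (hzp : MemLp z (ENNReal.ofReal p) volume) :
    ∀ x, z x = 0 := by
  obtain ⟨hu, hv, hupos, hvpos, hu', hv', hW, hT, hB⟩ := h
  set A : ℝ := (r 0 * deriv v 0) * z 0 - (r 0 * deriv z 0) * v 0 with hA
  set B : ℝ := (r 0 * deriv z 0) * u 0 - (r 0 * deriv u 0) * z 0 with hBdef
  have hz_eq : ∀ x, z x = A * u x + B * v x := by
    intro x
    have e1 := wronskian_const r q v z hv hz x 0
    have e2 := wronskian_const r q z u hz hu x 0
    have e3 := hW x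
    rw [hA, hBdef]
    linear_combination u x * e1 + v x * e2 - z x * e3
  have hvm : Monotone v := by
    have := hv.1
    exact monotone_of_deriv_nonneg this hv'
  have hum : Antitone u := antitone_of_deriv_nonpos hu.1 hu'
  -- B = 0
  have hB0 : B = 0 := by
    by_contra hBne
    have htend : Tendsto (fun x => z x / v x) atTop (nhds B) := by
      have : (fun x => z x / v x) = fun x => A * (u x / v x) + B := by
        funext x
        rw [hz_eq x, add_div, mul_div_assoc, mul_div_assoc, div_self (hvpos x).ne', mul_one]
      rw [this]
      have := (hT.const_mul A).add (tendsto_const_nhds (x := B))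
      simpa using this
    have habs : Tendsto (fun x => |z x / v x|) atTop (nhds |B|) := htend.abs
    have hBpos : 0 < |B| := abs_pos.mpr hBne
    have hev : ∀ᶠ x in atTop, |B| / 2 < |z x / v x| :=
      habs.eventually_const_lt (half_lt_self hBpos)
    obtain ⟨A0, hA0⟩ := hev.exists_forall_of_atTop
    refine not_memLp_aux z p hp hzp (Ici A0) measurableSet_Ici
      (by simp [Real.volume_Ici]) (|B| / 2 * v A0) (mul_pos (half_pos hBpos) (hvpos A0)) ?_
    intro x hx
    have h1 := hA0 x hx
    have h2 : |z x / v x| * v x ≤ |z x| := by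
      rw [abs_div, abs_of_pos (hvpos x), div_mul_cancel₀]
      exact (hvpos x).ne'
    calc |B| / 2 * v A0 ≤ |B| / 2 * v x := by
          have := hvm hx
          nlinarith [abs_nonneg B]
      _ ≤ |z x / v x| * v x := by nlinarith [hvpos x]
      _ ≤ |z x| := h2
  -- A = 0
  have hA0 : A = 0 := by
    by_contra hAne
    have htend : Tendsto (fun x => z x / u x) atBot (nhds A) := by
      have : (fun x => z x / u x) = fun x => B * (v x / u x) + A := by
        funext x
        rw [hz_eq x, add_div, mul_div_assoc, mul_div_assoc, div_self (hupos x).ne', mul_one]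
        ring
      rw [this]
      have := (hB.const_mul B).add (tendsto_const_nhds (x := A))
      simpa using this
    have habs : Tendsto (fun x => |z x / u x|) atBot (nhds |A|) := htend.abs
    have hApos : 0 < |A| := abs_pos.mpr hAne
    have hev : ∀ᶠ x in atBot, |A| / 2 < |z x / u x| :=
      habs.eventually_const_lt (half_lt_self hApos)
    obtain ⟨A0, hA0⟩ := hev.exists_forall_of_atBot
    refine not_memLp_aux z p hp hzp (Iic A0) measurableSet_Iic
      (by simp [Real.volume_Iic]) (|A| / 2 * u A0) (mul_pos (half_pos hApos) (hupos A0)) ?_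
    intro x hx
    have h1 := hA0 x hx
    have h2 : |z x / u x| * u x ≤ |z x| := by
      rw [abs_div, abs_of_pos (hupos x), div_mul_cancel₀]
      exact (hupos x).ne'
    calc |A| / 2 * u A0 ≤ |A| / 2 * u x := by
          have := hum hx
          nlinarith [abs_nonneg A]
      _ ≤ |z x / u x| * u x := by nlinarith [hupos x]
      _ ≤ |z x| := h2
  intro x
  rw [hz_eq x, hA0, hB0]
  ring
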